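/- arXiv:1702.06190 — 5 statements merged into one kernel-verified Lean document; each statement's English description precedes it below -/
import Mathlib

section
/- Let m ∈ ℕ, F ∈ C(m) and ε ≥ 0. Then for every n ∈ ℕ with n ≥ 1, the ε-rotation set satisfies ρ_ε(F) ⊆ Conv(K_n^ε(F)). -/
open Metric Set Pointwise

noncomputable section

abbrev E (m : ℕ) := EuclideanSpace ℝ (Fin m)

def cube (m : ℕ) : Set (E m) := {x | ∀ i, x i ∈ Set.Icc (0:ℝ) 1}

def intVec {m : ℕ} (t : Fin m → ℤ) : E m := WithLp.toLp 2 (fun i => (t i : ℝ))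

def IsLift {m : ℕ} (F : E m → E m) : Prop :=
  Continuous F ∧ ∀ (x : E m) (t : Fin m → ℤ), F (x + intVec t) = F x + intVec t

def IsHomeoLift {m : ℕ} (F : E m → E m) : Prop :=
  IsLift F ∧ ∃ h : (E m) ≃ₜ (E m), ⇑h = F

def Kset {m : ℕ} (F : E m → E m) (k : ℕ) : Set (E m) :=
  {v | ∃ x ∈ cube m, v = (k : ℝ)⁻¹ • (F^[k] x - x)}

def rotSet {m : ℕ} (F : E m → E m) : Set (E m) :=
  ⋂ n ≥ 1, closure (⋃ k ≥ n, Kset F k)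

def IsPseudoOrbit {m : ℕ} (F : E m → E m) (ε : ℝ) (n : ℕ) (ξ : ℕ → E m) : Prop :=
  ∀ j < n, ‖F (ξ j) - ξ (j + 1)‖ ≤ ε

def KsetEps {m : ℕ} (F : E m → E m) (ε : ℝ) (k : ℕ) : Set (E m) :=
  {v | ∃ ξ : ℕ → E m, IsPseudoOrbit F ε k ξ ∧ ξ 0 ∈ cube m ∧ v = (k : ℝ)⁻¹ • (ξ k - ξ 0)}

def rotSetEps {m : ℕ} (F : E m → E m) (ε : ℝ) : Set (E m) :=
  ⋂ n ≥ 1, closure (⋃ k ≥ n, KsetEps F ε k)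

lemma compact_cube (m : ℕ) : IsCompact (cube m) := by
  have : cube m = (WithLp.toLp 2) '' Set.pi Set.univ (fun _ : Fin m => Set.Icc (0:ℝ) 1) := by
    ext x; exact ⟨fun h => ⟨x.ofLp, fun i _ => h i, rfl⟩, by rintro ⟨y, hy, rfl⟩ i; exact hy i (Set.mem_univ i)⟩
  rw [this]
  exact (isCompact_univ_pi fun _ => isCompact_Icc).image (PiLp.continuous_toLp 2 _)

lemma exists_bound {m : ℕ} {F : E m → E m} (hF : IsLift F) :
    ∃ M : ℝ, 0 ≤ M ∧ ∀ y, ‖F y - y‖ ≤ M := by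
  obtain ⟨M, hM⟩ := (compact_cube m).exists_bound_of_continuousOn
    ((hF.1.sub continuous_id).norm.continuousOn)
  refine ⟨max M 0, le_max_right _ _, fun y => ?_⟩
  set t : Fin m → ℤ := fun i => ⌊y i⌋ with ht
  set x : E m := y - intVec t with hx
  have hxc : x ∈ cube m := by
    intro i
    have hxi : x i = y i - (⌊y i⌋ : ℝ) := by simp [hx, ht, intVec]
    rw [hxi]
    exact ⟨sub_nonneg.mpr (Int.floor_le _), by linarith [(Int.lt_floor_add_one (y i))]⟩
  have hyx : y = x + intVec t := by rw [hx]; abel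
  have heq : F y - y = F x - x := by
    rw [hyx, hF.2 x t]; abel
  rw [heq]
  have := hM x hxc
  simp only [norm_norm, id_eq] at this
  exact le_max_of_le_left this

lemma block_mem {m : ℕ} {F : E m → E m} (hF : IsLift F) {ε : ℝ} {k n a : ℕ}
    {ξ : ℕ → E m} (hξ : IsPseudoOrbit F ε k ξ) (hak : a + n ≤ k) :
    (n : ℝ)⁻¹ • (ξ (a + n) - ξ a) ∈ KsetEps F ε n := by
  set t : Fin m → ℤ := fun i => -⌊ξ a i⌋ with ht
  refine ⟨fun j => ξ (a + j) + intVec t, ?_, ?_, ?_⟩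
  · intro j hj
    have h1 : F (ξ (a + j) + intVec t) = F (ξ (a + j)) + intVec t := hF.2 _ _
    have h2 : F (ξ (a + j)) + intVec t - (ξ (a + j + 1) + intVec t)
        = F (ξ (a + j)) - ξ (a + j + 1) := by abel
    rw [show a + j + 1 = a + (j + 1) by ring] at h2
    rw [h1, h2]
    exact hξ (a + j) (by omega)
  · intro i
    show (ξ (a + 0) + intVec t) i ∈ Set.Icc (0:ℝ) 1
    have hxi : (ξ (a + 0) + intVec t) i = ξ a i - (⌊ξ a i⌋ : ℝ) := by
      show ξ (a + 0) i + intVec t i = _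
      rw [ht, show a + 0 = a from rfl]
      show ξ a i + ((-⌊ξ a i⌋ : ℤ) : ℝ) = _
      push_cast; ring
    rw [hxi]
    exact ⟨sub_nonneg.mpr (Int.floor_le _), by linarith [(Int.lt_floor_add_one (ξ a i))]⟩
  · congr 1
    show ξ (a + n) - ξ a = (ξ (a + n) + intVec t) - (ξ (a + 0) + intVec t)
    rw [show a + 0 = a from rfl]
    abel

lemma telescope {m : ℕ} {C : ℝ} {k : ℕ} {ξ : ℕ → E m}
    (hstep : ∀ j < k, ‖ξ (j + 1) - ξ j‖ ≤ C) :
    ∀ a c : ℕ, a + c ≤ k → ‖ξ (a + c) - ξ a‖ ≤ c * C := by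
  intro a c
  induction c with
  | zero => intro _; simp
  | succ c ih =>
    intro h
    have h1 : ξ (a + (c+1)) - ξ a = (ξ ((a + c) + 1) - ξ (a + c)) + (ξ (a + c) - ξ a) := by
      rw [show a + (c + 1) = (a + c) + 1 from rfl]; abel
    rw [h1]
    calc ‖_ + _‖ ≤ ‖ξ ((a + c) + 1) - ξ (a + c)‖ + ‖ξ (a + c) - ξ a‖ := norm_add_le _ _
    _ ≤ C + c * C := add_le_add (hstep _ (by omega)) (ih (by omega))
    _ = (c + 1 : ℕ) * C := by push_cast; ring

lemma step_bound {m : ℕ} {F : E m → E m} {ε M : ℝ} {k : ℕ} {ξ : ℕ → E m}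
    (hξ : IsPseudoOrbit F ε k ξ) (hM : ∀ y, ‖F y - y‖ ≤ M) :
    ∀ j < k, ‖ξ (j + 1) - ξ j‖ ≤ M + ε := by
  intro j hj
  have h1 : ξ (j + 1) - ξ j = (F (ξ j) - ξ j) - (F (ξ j) - ξ (j + 1)) := by abel
  rw [h1]
  calc ‖_ - _‖ ≤ ‖F (ξ j) - ξ j‖ + ‖F (ξ j) - ξ (j+1)‖ := norm_sub_le _ _
  _ ≤ M + ε := add_le_add (hM _) (hξ j hj)

lemma near_conv {m : ℕ} {F : E m → E m} (hF : IsLift F) {ε M : ℝ} (hε : 0 ≤ ε)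
    (hM0 : 0 ≤ M) (hM : ∀ y, ‖F y - y‖ ≤ M) {n k : ℕ} (hn : 1 ≤ n) (hk : n ≤ k) :
    ∀ u ∈ KsetEps F ε k, ∃ y ∈ convexHull ℝ (KsetEps F ε n),
      ‖u - y‖ ≤ 2 * n * (M + ε) / k := by
  rintro u ⟨ξ, hξ, -, rfl⟩
  set C : ℝ := M + ε with hC
  have hC0 : 0 ≤ C := add_nonneg hM0 hε
  set q : ℕ := k / n with hq
  set r : ℕ := k % n with hr
  have hqr : q * n + r = k := by rw [hq, hr, mul_comm]; exact Nat.div_add_mod k n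
  have hq1 : 1 ≤ q := (Nat.one_le_div_iff (by omega)).mpr hk
  have hrn : r < n := Nat.mod_lt _ (by omega)
  have hk1 : 1 ≤ k := le_trans hn hk
  have hstep := step_bound hξ hM
  -- the blocks
  set w : ℕ → E m := fun j => (n : ℝ)⁻¹ • (ξ (j * n + n) - ξ (j * n)) with hw
  have hwmem : ∀ j < q, w j ∈ KsetEps F ε n := by
    intro j hj
    exact block_mem hF hξ (by nlinarith [Nat.succ_le_of_lt hj])
  set y : E m := ∑ j ∈ Finset.range q, ((q : ℝ))⁻¹ • w j with hy
  have hq0 : (q : ℝ) ≠ 0 := Nat.cast_ne_zero.mpr (by omega)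
  have hymem : y ∈ convexHull ℝ (KsetEps F ε n) := by
    refine (convex_convexHull ℝ _).sum_mem (fun j _ => by positivity) ?_
      (fun j hj => subset_convexHull ℝ _ (hwmem j (Finset.mem_range.mp hj)))
    simp [Finset.sum_const, mul_inv_cancel₀ hq0]
  refine ⟨y, hymem, ?_⟩
  -- telescoping identity
  set S : E m := ξ (q * n) - ξ 0 with hS
  have hSsum : ∑ j ∈ Finset.range q, (ξ ((j + 1) * n) - ξ (j * n)) = S := by
    have := Finset.sum_range_sub (fun j => ξ (j * n)) q
    simpa [hS] using this
  have hyS : y = ((q : ℝ)⁻¹ * (n : ℝ)⁻¹) • S := by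
    rw [hy, ← hSsum, Finset.smul_sum]
    refine Finset.sum_congr rfl fun j _ => ?_
    rw [hw, smul_smul, show (j + 1) * n = j * n + n by ring]
  -- decompose u - y
  have hdecomp : (k : ℝ)⁻¹ • (ξ k - ξ 0) - y
      = (k : ℝ)⁻¹ • (ξ k - ξ (q * n)) + ((k : ℝ)⁻¹ - (q : ℝ)⁻¹ * (n : ℝ)⁻¹) • S := by
    rw [hyS, hS]
    module
  rw [hdecomp]
  -- bounds
  have hb1 : ‖ξ k - ξ (q * n)‖ ≤ r * C := by
    have := telescope hstep (q * n) r (by omega)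
    rwa [show q * n + r = k from hqr] at this
  have hb2 : ‖S‖ ≤ (q * n : ℕ) * C := by
    have := telescope hstep 0 (q * n) (by omega)
    simpa [hS] using this
  have hKpos : (0 : ℝ) < (k : ℝ) := by positivity
  set A : ℝ := (q : ℝ) * (n : ℝ) with hA
  have hApos : (0 : ℝ) < A := by
    have h1 : (0:ℝ) < (q:ℝ) := by positivity
    have h2 : (0:ℝ) < (n:ℝ) := by
      have : 0 < n := by omega
      exact_mod_cast this
    positivity
  have hAK : A + (r : ℝ) = (k : ℝ) := by rw [hA]; exact_mod_cast hqr
  have hr0 : (0:ℝ) ≤ (r:ℝ) := Nat.cast_nonneg r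
  have hAinv : (k : ℝ)⁻¹ ≤ A⁻¹ := by
    apply inv_anti₀ hApos
    linarith
  have hcoef : |(k : ℝ)⁻¹ - (q : ℝ)⁻¹ * (n : ℝ)⁻¹| = A⁻¹ - (k : ℝ)⁻¹ := by
    rw [← mul_inv, ← hA, abs_sub_comm, abs_of_nonneg (sub_nonneg.mpr hAinv)]
  calc ‖(k : ℝ)⁻¹ • (ξ k - ξ (q * n)) + ((k : ℝ)⁻¹ - (q : ℝ)⁻¹ * (n : ℝ)⁻¹) • S‖
      ≤ ‖(k : ℝ)⁻¹ • (ξ k - ξ (q * n))‖ + ‖((k : ℝ)⁻¹ - (q : ℝ)⁻¹ * (n : ℝ)⁻¹) • S‖ :=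
        norm_add_le _ _
    _ ≤ (k : ℝ)⁻¹ * (r * C) + (A⁻¹ - (k : ℝ)⁻¹) * (A * C) := by
        rw [norm_smul, norm_smul, Real.norm_eq_abs, Real.norm_eq_abs, hcoef,
          abs_of_nonneg (by positivity : (0:ℝ) ≤ (k:ℝ)⁻¹)]
        gcongr
        · calc ‖S‖ ≤ (q * n : ℕ) * C := hb2
            _ = A * C := by rw [hA]; push_cast; ring
    _ = 2 * (r : ℝ) * C / k := by
        have h1 : (A⁻¹ - (k : ℝ)⁻¹) * (A * C) = ((k : ℝ) - A) * C / k := by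
          field_simp
        rw [h1, show (k:ℝ) - A = (r:ℝ) by linarith]
        field_simp
        ring
    _ ≤ 2 * (n : ℝ) * C / k := by
        gcongr

/-- The ε-rotation set is contained in the closed convex hull of `K_n^ε(F)` for every `n ≥ 1`. -/
theorem rotSetEps_subset_convKsetEps {m : ℕ} {F : E m → E m} (hF : IsLift F)
    {ε : ℝ} (hε : 0 ≤ ε) :
    ∀ n : ℕ, 1 ≤ n → rotSetEps F ε ⊆ closure (convexHull ℝ (KsetEps F ε n)) := by
  intro n hn v hv
  obtain ⟨M, hM0, hM⟩ := exists_bound hF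
  set C : ℝ := M + ε with hCdef
  clear_value C
  have hC0 : 0 ≤ C := by rw [hCdef]; exact add_nonneg hM0 hε
  rw [Metric.mem_closure_iff]
  intro δ hδ
  -- choose N large
  obtain ⟨N₀, hN₀⟩ := exists_nat_gt (4 * n * C / δ)
  set N : ℕ := max n (max 1 N₀) with hN
  have hnN : n ≤ N := le_max_left _ _
  have hN1 : 1 ≤ N := le_trans (le_max_left _ _) (le_max_right _ _)
  have hNpos : (0:ℝ) < N := by exact_mod_cast hN1
  have hNbig : 4 * n * C / δ < N := lt_of_lt_of_le hN₀ (by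
    exact_mod_cast le_trans (le_max_right 1 N₀) (le_max_right n _))
  have hsmall : 2 * (n:ℝ) * C / N < δ / 2 := by
    rw [div_lt_iff₀ hNpos]
    rw [div_lt_iff₀ hδ] at hNbig
    linarith
  -- v is in the closure of the union over k ≥ N
  have hv' : v ∈ closure (⋃ k ≥ N, KsetEps F ε k) := by
    have := Set.mem_iInter₂.mp hv N hN1
    exact this
  obtain ⟨u, hu, hdvu⟩ := Metric.mem_closure_iff.mp hv' (δ/2) (by linarith)
  obtain ⟨k, hkN, huk⟩ := Set.mem_iUnion₂.mp hu
  have hkn : n ≤ k := le_trans hnN hkN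
  obtain ⟨y, hy, huy⟩ := near_conv hF hε hM0 hM hn hkn u huk
  rw [← hCdef] at huy
  refine ⟨y, hy, ?_⟩
  have hkpos : (0:ℝ) < k := lt_of_lt_of_le hNpos (by exact_mod_cast hkN)
  have h1 : 2 * (n:ℝ) * C / k ≤ 2 * (n:ℝ) * C / N := by
    gcongr
  calc dist v y ≤ dist v u + dist u y := dist_triangle _ _ _
    _ = dist v u + ‖u - y‖ := by rw [dist_eq_norm u y]
    _ < δ / 2 + 2 * (n:ℝ) * C / N := by
        have := le_trans huy h1
        linarith
    _ < δ := by linarith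
end
end

section
/- Suppose F ∈ H(2) is Lipschitz continuous with Lipschitz constant L > 1, ε > 0, and the algorithm data satisfy Lη ≤ R ≤ ε. Then for every n ∈ ℕ with n ≥ 1: (1/n)·F^n([0,1]²) ⊆ Q_n* ⊆ { ξ_n/n : (ξ_j)_{j=0}^n is a 2ε-pseudo-orbit of F with ξ_0 ∈ [0,1]² }. -/
open Metric Set Pointwise

noncomputable section

def boxes (B0 : Set (Set (E 2))) : Set (Set (E 2)) :=
  {B' | ∃ B ∈ B0, ∃ t : Fin 2 → ℤ, B' = (fun x => x + intVec t) '' B}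

structure AlgoData (ε η R : ℝ) (F : E 2 → E 2) where
  B0 : Set (Set (E 2))
  compact' : ∀ B ∈ B0, IsCompact B
  subCube : ∀ B ∈ B0, B ⊆ cube 2
  small : ∀ B ∈ B0, Metric.diam B ≤ ε
  cover : ⋃₀ B0 = cube 2
  Γ : Set (E 2) → Set (E 2)
  Γ_sub : ∀ B ∈ boxes B0, Γ B ⊆ B
  Γ_fin : ∀ B ∈ boxes B0, (Γ B).Finite
  Γ_dense : ∀ B ∈ boxes B0, ∀ x ∈ B, ∃ y ∈ Γ B, dist x y ≤ η
  Γ_equiv : ∀ B ∈ boxes B0, ∀ t : Fin 2 → ℤ,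
    Γ ((fun x => x + intVec t) '' B) = (fun x => x + intVec t) '' Γ B

variable {ε η R : ℝ} {F : E 2 → E 2}

def boxImage (D : AlgoData ε η R F) (B : Set (E 2)) : Set (Set (E 2)) :=
  {B' | B' ∈ boxes D.B0 ∧ ∃ x ∈ D.Γ B, Metric.infDist (F x) B' ≤ R}

def boxCol (D : AlgoData ε η R F) : ℕ → Set (Set (E 2))
  | 0 => D.B0
  | k + 1 => {B' | ∃ B ∈ boxCol D k, B' ∈ boxImage D B}

def Qset (D : AlgoData ε η R F) : ℕ → Set (E 2)
  | 0 => cube 2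
  | k + 1 => ⋃ B ∈ boxCol D (k + 1), B

def QsetStar (D : AlgoData ε η R F) (n : ℕ) : Set (E 2) :=
  (n : ℝ)⁻¹ • Qset D n

lemma self_mem_boxes {B0 : Set (Set (E 2))} {B : Set (E 2)} (hB : B ∈ B0) :
    B ∈ boxes B0 := by
  refine ⟨B, hB, 0, ?_⟩
  have : intVec (m := 2) 0 = 0 := by ext i; simp [intVec]
  simp [this]

lemma boxCol_subset_boxes (D : AlgoData ε η R F) (k : ℕ) :
    boxCol D k ⊆ boxes D.B0 := by
  induction k with
  | zero => exact fun B hB => self_mem_boxes hB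
  | succ k ih =>
    rintro B' ⟨B, _, hB'⟩
    exact hB'.1

lemma isometry_add_intVec (t : Fin 2 → ℤ) :
    Isometry (fun x : E 2 => x + intVec t) :=
  Isometry.of_dist_eq fun x y => dist_add_right x y (intVec t)

lemma boxes_compact (D : AlgoData ε η R F) {B' : Set (E 2)} (h : B' ∈ boxes D.B0) :
    IsCompact B' := by
  obtain ⟨B, hB, t, rfl⟩ := h
  exact ((D.compact' B hB).image (isometry_add_intVec t).continuous)

lemma boxes_diam (D : AlgoData ε η R F) {B' : Set (E 2)} (h : B' ∈ boxes D.B0) :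
    Metric.diam B' ≤ ε := by
  obtain ⟨B, hB, t, rfl⟩ := h
  rw [(isometry_add_intVec t).diam_image]
  exact D.small B hB

lemma boxes_cover (D : AlgoData ε η R F) (z : E 2) : ∃ B' ∈ boxes D.B0, z ∈ B' := by
  set t : Fin 2 → ℤ := fun i => ⌊z i⌋ with ht
  have hx : z - intVec t ∈ cube 2 := by
    intro i
    have h1 : (z - intVec t) i = Int.fract (z i) := by
      rw [PiLp.sub_apply]
      show z i - ((⌊z i⌋ : ℤ) : ℝ) = _
      rw [Int.self_sub_floor]
    rw [h1]
    exact ⟨Int.fract_nonneg _, le_of_lt (Int.fract_lt_one _)⟩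
  rw [← D.cover] at hx
  obtain ⟨B, hB, hxB⟩ := hx
  refine ⟨(fun x => x + intVec t) '' B, ⟨B, hB, t, rfl⟩, ⟨z - intVec t, hxB, sub_add_cancel z (intVec t)⟩⟩

lemma image_subset_Qset {L : NNReal} (hL : LipschitzWith L F)
    (hLη : (L : ℝ) * η ≤ R) (D : AlgoData ε η R F) (k : ℕ) :
    ∀ x ∈ cube 2, ∃ B ∈ boxCol D k, F^[k] x ∈ B := by
  induction k with
  | zero =>
    intro x hx
    rw [← D.cover] at hx
    obtain ⟨B, hB, hxB⟩ := hx
    exact ⟨B, hB, hxB⟩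
  | succ k ih =>
    intro x hx
    obtain ⟨B, hBk, hxB⟩ := ih x hx
    have hBb : B ∈ boxes D.B0 := boxCol_subset_boxes D k hBk
    obtain ⟨y, hyΓ, hdy⟩ := D.Γ_dense B hBb (F^[k] x) hxB
    obtain ⟨B', hB'b, hzB'⟩ := boxes_cover D (F^[k+1] x)
    refine ⟨B', ⟨B, hBk, hB'b, y, hyΓ, ?_⟩, hzB'⟩
    have h1 : Metric.infDist (F y) B' ≤ dist (F y) (F^[k+1] x) :=
      Metric.infDist_le_dist_of_mem hzB'
    have h2 : dist (F y) (F^[k+1] x) ≤ (L : ℝ) * dist y (F^[k] x) := by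
      have := hL.dist_le_mul y (F^[k] x)
      rwa [Function.iterate_succ_apply'] at *
    have h3 : (L : ℝ) * dist y (F^[k] x) ≤ (L : ℝ) * η := by
      apply mul_le_mul_of_nonneg_left _ L.coe_nonneg
      rw [dist_comm]; exact hdy
    linarith

lemma Qset_pseudo (hε : 0 < ε) (hRε : R ≤ ε) (D : AlgoData ε η R F) (k : ℕ) :
    ∀ B ∈ boxCol D k, ∀ z ∈ B, ∃ ξ : ℕ → E 2,
      IsPseudoOrbit F (2 * ε) k ξ ∧ ξ 0 ∈ cube 2 ∧ ξ k = z := by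
  induction k with
  | zero =>
    intro B hB z hz
    exact ⟨fun _ => z, fun j hj => absurd hj (Nat.not_lt_zero j),
      D.subCube B hB hz, rfl⟩
  | succ k ih =>
    rintro B' ⟨B, hBk, hB'b, x, hxΓ, hled⟩ z hz
    have hBb : B ∈ boxes D.B0 := boxCol_subset_boxes D k hBk
    have hxB : x ∈ B := D.Γ_sub B hBb hxΓ
    obtain ⟨ξ, hξ, hξ0, hξk⟩ := ih B hBk x hxB
    obtain ⟨w, hwB', hw⟩ := (boxes_compact D hB'b).exists_infDist_eq_dist ⟨z, hz⟩ (F x)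
    refine ⟨fun j => if j = k + 1 then z else ξ j, ?_, by simpa using hξ0, by simp⟩
    intro j hj
    rcases lt_or_eq_of_le (Nat.lt_succ_iff.mp hj) with hjk | hjk
    · have h1 : j ≠ k + 1 := by omega
      have h2 : j + 1 ≠ k + 1 := by omega
      simp only [h1, h2, if_false]
      exact hξ j hjk
    · subst hjk
      have h1 : j ≠ j + 1 := by omega
      simp only [h1, if_false, if_pos rfl, hξk]
      have hd1 : dist (F x) w ≤ ε := by rw [← hw]; linarith
      have hd2 : dist w z ≤ ε := le_trans
        (Metric.dist_le_diam_of_mem (boxes_compact D hB'b).isBounded hwB' hz)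
        (boxes_diam D hB'b)
      calc ‖F x - z‖ = dist (F x) z := by rw [dist_eq_norm]
        _ ≤ dist (F x) w + dist w z := dist_triangle _ _ _
        _ ≤ 2 * ε := by linarith

/-- The algorithm overestimates: `(1/n)F^n([0,1]²) ⊆ Q_n* ⊆ {ξ_n/n : (ξ_j) a 2ε-pseudo-orbit}`. -/
theorem box_overestimation {F : E 2 → E 2} (hF : IsHomeoLift F)
    {L : NNReal} (hL : LipschitzWith L F) (hL1 : 1 < L)
    {ε η R : ℝ} (hε : 0 < ε) (hη : 0 < η) (hR : 0 < R)
    (hLη : (L : ℝ) * η ≤ R) (hRε : R ≤ ε)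
    (D : AlgoData ε η R F) {n : ℕ} (hn : 1 ≤ n) :
    (n : ℝ)⁻¹ • (F^[n] '' cube 2) ⊆ QsetStar D n ∧
      QsetStar D n ⊆ {v : E 2 | ∃ ξ : ℕ → E 2, IsPseudoOrbit F (2 * ε) n ξ ∧
        ξ 0 ∈ cube 2 ∧ v = (n : ℝ)⁻¹ • ξ n} := by
  obtain ⟨k, rfl⟩ : ∃ k, n = k + 1 := ⟨n - 1, by omega⟩
  constructor
  · apply smul_set_mono
    rintro z ⟨x, hx, rfl⟩
    obtain ⟨B, hB, hmem⟩ := image_subset_Qset hL hLη D (k + 1) x hx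
    exact Set.mem_biUnion hB hmem
  · rintro v hv
    obtain ⟨z, hz, rfl⟩ := hv
    obtain ⟨B, hB, hzB⟩ := Set.mem_iUnion₂.mp hz
    obtain ⟨ξ, hξ, hξ0, hξn⟩ := Qset_pseudo hε hRε D (k + 1) B hB z hzB
    exact ⟨ξ, hξ, hξ0, by rw [hξn]⟩
end
end

section
/- Suppose F ∈ H(2) is Lipschitz continuous with Lipschitz constant L > 1 and ε > 0. Then for every n ∈ ℕ with n ≥ 1, d_H(K_n^{2ε}(F), K_n(F)) ≤ 2ε(L^n − 1)/(n(L − 1)). -/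
open Metric Set Pointwise

noncomputable section

/-- Shadowing estimate: a pseudo-orbit stays within `ε * ∑_{i<j} L^i` of the true orbit. -/
lemma pseudoOrbit_dist_iterate {m : ℕ} {F : E m → E m} {L : NNReal}
    (hL : LipschitzWith L F) {ε : ℝ} {n : ℕ} {ξ : ℕ → E m}
    (hξ : IsPseudoOrbit F ε n ξ) :
    ∀ j ≤ n, ‖ξ j - F^[j] (ξ 0)‖ ≤ ε * ∑ i ∈ Finset.range j, (L : ℝ) ^ i := by
  intro j hj
  induction j with
  | zero => simp
  | succ j ih =>
    have hj' : j ≤ n := Nat.le_of_succ_le hj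
    have hjn : j < n := hj
    have h1 : ‖F (ξ j) - ξ (j + 1)‖ ≤ ε := hξ j hjn
    have h2 : ‖F (ξ j) - F (F^[j] (ξ 0))‖ ≤ (L : ℝ) * ‖ξ j - F^[j] (ξ 0)‖ := by
      have := hL.dist_le_mul (ξ j) (F^[j] (ξ 0))
      simpa [dist_eq_norm] using this
    have h3 : ‖ξ (j + 1) - F^[j + 1] (ξ 0)‖ ≤
        ‖F (ξ j) - ξ (j + 1)‖ + ‖F (ξ j) - F (F^[j] (ξ 0))‖ := by
      rw [Function.iterate_succ_apply']
      have e : ξ (j + 1) - F (F^[j] (ξ 0)) =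
          -(F (ξ j) - ξ (j + 1)) + (F (ξ j) - F (F^[j] (ξ 0))) := by abel
      rw [e]
      calc ‖-(F (ξ j) - ξ (j + 1)) + (F (ξ j) - F (F^[j] (ξ 0)))‖
          ≤ ‖-(F (ξ j) - ξ (j + 1))‖ + ‖F (ξ j) - F (F^[j] (ξ 0))‖ := norm_add_le _ _
        _ = ‖F (ξ j) - ξ (j + 1)‖ + ‖F (ξ j) - F (F^[j] (ξ 0))‖ := by rw [norm_neg]
    have hLnn : (0 : ℝ) ≤ (L : ℝ) := L.coe_nonneg
    have := ih hj'
    calc ‖ξ (j + 1) - F^[j + 1] (ξ 0)‖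
        ≤ ε + (L : ℝ) * ‖ξ j - F^[j] (ξ 0)‖ := by linarith
      _ ≤ ε + (L : ℝ) * (ε * ∑ i ∈ Finset.range j, (L : ℝ) ^ i) := by
          have := mul_le_mul_of_nonneg_left this hLnn
          linarith
      _ = ε * ∑ i ∈ Finset.range (j + 1), (L : ℝ) ^ i := by
          rw [geom_sum_succ]; ring

/-- `d_H(K_n^{2ε}(F), K_n(F)) ≤ 2ε(Lⁿ − 1)/(n(L − 1))`. -/
theorem hausdorffDist_KsetEps_Kset {F : E 2 → E 2} (hF : IsHomeoLift F)
    {L : NNReal} (hL : LipschitzWith L F) (hL1 : 1 < L)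
    {ε : ℝ} (hε : 0 < ε) {n : ℕ} (hn : 1 ≤ n) :
    Metric.hausdorffDist (KsetEps F (2 * ε) n) (Kset F n) ≤
      2 * ε * ((L : ℝ) ^ n - 1) / (n * ((L : ℝ) - 1)) := by
  have hL1' : (1 : ℝ) < (L : ℝ) := by exact_mod_cast hL1
  have hLne : (L : ℝ) ≠ 1 := ne_of_gt hL1'
  have hn0 : (0 : ℝ) < (n : ℝ) := by exact_mod_cast hn
  have hr0 : 0 ≤ 2 * ε * ((L : ℝ) ^ n - 1) / (n * ((L : ℝ) - 1)) := by
    apply div_nonneg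
    · have : (1 : ℝ) ≤ (L : ℝ) ^ n := one_le_pow₀ (le_of_lt hL1')
      nlinarith
    · nlinarith
  apply Metric.hausdorffDist_le_of_mem_dist hr0
  · rintro v ⟨ξ, hξ, hξ0, rfl⟩
    refine ⟨(n : ℝ)⁻¹ • (F^[n] (ξ 0) - ξ 0), ⟨ξ 0, hξ0, rfl⟩, ?_⟩
    have key := pseudoOrbit_dist_iterate hL hξ n le_rfl
    rw [geom_sum_eq hLne] at key
    rw [dist_eq_norm, ← smul_sub, norm_smul]
    have : ξ n - ξ 0 - (F^[n] (ξ 0) - ξ 0) = ξ n - F^[n] (ξ 0) := by abel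
    rw [this]
    have hninv : ‖(n : ℝ)⁻¹‖ = (n : ℝ)⁻¹ := by
      rw [Real.norm_eq_abs, abs_of_nonneg (by positivity)]
    rw [hninv]
    calc (n : ℝ)⁻¹ * ‖ξ n - F^[n] (ξ 0)‖
        ≤ (n : ℝ)⁻¹ * (2 * ε * (((L : ℝ) ^ n - 1) / ((L : ℝ) - 1))) := by
          apply mul_le_mul_of_nonneg_left key (by positivity)
      _ = 2 * ε * ((L : ℝ) ^ n - 1) / (n * ((L : ℝ) - 1)) := by
          field_simp
  · rintro v ⟨x, hx, rfl⟩
    refine ⟨(n : ℝ)⁻¹ • (F^[n] x - x), ⟨fun j => F^[j] x, ?_, by simpa using hx, by simp⟩, ?_⟩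
    · intro j hj
      show ‖F (F^[j] x) - F^[j + 1] x‖ ≤ 2 * ε
      rw [Function.iterate_succ_apply']
      simp
      positivity
    · simpa using hr0
end
end

section
/- Let f : 𝕋² → 𝕋² be a homeomorphism of the two-torus homotopic to the identity with lift F ∈ H(2), and let δ, γ ∈ (0, 1/2) be such that d(x,y) < δ implies d(f(x), f(y)) < 1/2 − γ for all x, y ∈ 𝕋². Assume f has the δ-shadowing property with constant ε for some ε ∈ (0, γ). Then F has the δ-shadowing property with constant ε, i.e. every ε-pseudo-orbit (ξ_n)_{n≥0} of F in ℝ² satisfies ‖F^n(x) − ξ_n‖ < δ for all n ≥ 0, for some x ∈ ℝ². -/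
open Metric Set Pointwise

noncomputable section

def lattice2 : AddSubgroup (E 2) :=
  AddSubgroup.closure (Set.range fun t : Fin 2 → ℤ => intVec t)

abbrev Torus2 := E 2 ⧸ lattice2

def pr : E 2 → Torus2 := QuotientAddGroup.mk

/-! ### Auxiliary lemmas -/

lemma intVec_add (s t : Fin 2 → ℤ) : intVec (s + t) = intVec s + intVec t := by
  ext i
  simp [intVec]

lemma intVec_neg (t : Fin 2 → ℤ) : intVec (-t) = -(intVec t) := by
  ext i
  simp [intVec]

/-- The lattice as an explicit subgroup with carrier `range intVec`. -/
def latticeSub : AddSubgroup (E 2) where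
  carrier := Set.range (intVec (m := 2))
  zero_mem' := ⟨0, by ext i; simp [intVec]⟩
  add_mem' := by
    rintro _ _ ⟨s, rfl⟩ ⟨t, rfl⟩
    exact ⟨s + t, intVec_add s t⟩
  neg_mem' := by
    rintro _ ⟨t, rfl⟩
    exact ⟨-t, intVec_neg t⟩

lemma lattice2_eq : lattice2 = latticeSub := by
  have : (Set.range fun t : Fin 2 → ℤ => intVec t) = (latticeSub : Set (E 2)) := rfl
  rw [lattice2, this, AddSubgroup.closure_eq]

lemma mem_lattice2_iff {v : E 2} : v ∈ lattice2 ↔ ∃ t : Fin 2 → ℤ, intVec t = v := by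
  rw [lattice2_eq]; rfl

lemma abs_apply_le_norm (x : E 2) (i : Fin 2) : |x i| ≤ ‖x‖ := by
  rw [EuclideanSpace.norm_eq]
  have h1 : |x i| = Real.sqrt (‖x i‖ ^ 2) := by
    rw [Real.sqrt_sq_eq_abs]; simp
  rw [h1]
  apply Real.sqrt_le_sqrt
  have := Finset.single_le_sum (f := fun j => ‖x j‖ ^ 2)
    (fun j _ => by positivity) (Finset.mem_univ i)
  simpa using this

lemma one_le_norm_lattice {v : E 2} (hv : v ∈ lattice2) (hv0 : v ≠ 0) : 1 ≤ ‖v‖ := by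
  obtain ⟨t, rfl⟩ := mem_lattice2_iff.mp hv
  have ht : ∃ i, t i ≠ 0 := by
    by_contra h
    push_neg at h
    apply hv0
    ext i
    simp [intVec, h i]
  obtain ⟨i, hi⟩ := ht
  have h1 : (1 : ℝ) ≤ |(t i : ℝ)| := by
    have : (1 : ℤ) ≤ |t i| := Int.one_le_abs hi
    calc (1 : ℝ) = ((1 : ℤ) : ℝ) := by norm_num
    _ ≤ ((|t i| : ℤ) : ℝ) := by exact_mod_cast this
    _ = |(t i : ℝ)| := by push_cast; ring
  calc (1 : ℝ) ≤ |(t i : ℝ)| := h1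
  _ = |intVec t i| := by simp [intVec]
  _ ≤ ‖intVec t‖ := abs_apply_le_norm _ i

lemma dist_pr_eq (a b : E 2) : dist (pr a) (pr b) = ‖(QuotientAddGroup.mk (a - b) : Torus2)‖ := by
  rw [dist_eq_norm]
  congr 1

lemma dist_pr_le (a b : E 2) : dist (pr a) (pr b) ≤ ‖a - b‖ := by
  rw [dist_pr_eq]
  exact QuotientAddGroup.norm_mk_le_norm

lemma exists_lattice_rep {w : E 2} {c : ℝ}
    (h : ‖(QuotientAddGroup.mk w : Torus2)‖ < c) :
    ∃ v ∈ lattice2, ‖w - v‖ < c := by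
  have hpos : 0 < c - ‖(QuotientAddGroup.mk w : Torus2)‖ := by linarith
  obtain ⟨s, hs, hns⟩ := QuotientAddGroup.exists_norm_add_lt lattice2 w hpos
  refine ⟨-s, neg_mem hs, ?_⟩
  have : ‖(QuotientAddGroup.mk' lattice2) w‖ = ‖(QuotientAddGroup.mk w : Torus2)‖ := rfl
  rw [sub_neg_eq_add]
  rw [this] at hns
  linarith

/-- The dichotomy: if the quotient norm of `w` is `< c ≤ 1/2`, then either
`‖w‖ < c` or `‖w‖ > 1 - c`. -/
lemma norm_dichotomy {w : E 2} {c : ℝ} (hc : c ≤ 1 / 2)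
    (h : ‖(QuotientAddGroup.mk w : Torus2)‖ < c) :
    ‖w‖ < c ∨ 1 - c < ‖w‖ := by
  obtain ⟨v, hv, hvn⟩ := exists_lattice_rep h
  by_cases hv0 : v = 0
  · left; rwa [hv0, sub_zero] at hvn
  · right
    have h1 : 1 ≤ ‖v‖ := one_le_norm_lattice hv hv0
    have h2 : ‖v‖ ≤ ‖w‖ + ‖w - v‖ := by
      calc ‖v‖ = ‖w - (w - v)‖ := by congr 1; abel
      _ ≤ ‖w‖ + ‖w - v‖ := norm_sub_le _ _
    linarith

/-- Combination: quotient norm `< c ≤ 1/2` and `‖w‖ < 1 - c` imply `‖w‖ < c`. -/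
lemma norm_small {w : E 2} {c : ℝ} (hc : c ≤ 1 / 2)
    (h : ‖(QuotientAddGroup.mk w : Torus2)‖ < c) (hw : ‖w‖ < 1 - c) : ‖w‖ < c := by
  rcases norm_dichotomy hc h with h' | h'
  · exact h'
  · linarith

/-- Via the intermediate value theorem: if nearby points have images whose quotient
norm difference is `< 1/2 - γ`, then the actual norm difference is `< 1/2 - γ`. -/
lemma step_bound_s15 {F : E 2 → E 2} (hFc : Continuous F) {δ γ : ℝ}
    (hγ0 : 0 < γ) (hγh : γ < 1 / 2)
    (hkey : ∀ a b : E 2, dist (pr a) (pr b) < δ →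
      ‖(QuotientAddGroup.mk (F a - F b) : Torus2)‖ < 1 / 2 - γ)
    {p q : E 2} (hpq : ‖p - q‖ < δ) : ‖F p - F q‖ < 1 / 2 - γ := by
  set g : ℝ → ℝ := fun t => ‖F (q + t • (p - q)) - F q‖ with hg
  have hgc : Continuous g := by
    apply Continuous.norm
    exact (hFc.comp (continuous_const.add (continuous_id.smul continuous_const))).sub
      continuous_const
  have hquot : ∀ t ∈ Set.Icc (0 : ℝ) 1,
      ‖(QuotientAddGroup.mk (F (q + t • (p - q)) - F q) : Torus2)‖ < 1 / 2 - γ := by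
    intro t ht
    apply hkey
    have h1 : dist (pr (q + t • (p - q))) (pr q) ≤ ‖q + t • (p - q) - q‖ := dist_pr_le _ _
    have h2 : ‖q + t • (p - q) - q‖ = |t| * ‖p - q‖ := by
      rw [add_sub_cancel_left, norm_smul, Real.norm_eq_abs]
    have h3 : |t| ≤ 1 := by
      rw [abs_le]; exact ⟨by linarith [ht.1], ht.2⟩
    have h4 : |t| * ‖p - q‖ ≤ ‖p - q‖ := by
      nlinarith [norm_nonneg (p - q)]
    calc dist (pr (q + t • (p - q))) (pr q) ≤ |t| * ‖p - q‖ := h2 ▸ h1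
    _ ≤ ‖p - q‖ := h4
    _ < δ := hpq
  have hdich : ∀ t ∈ Set.Icc (0 : ℝ) 1, g t < 1 / 2 - γ ∨ 1 / 2 + γ < g t := by
    intro t ht
    rcases norm_dichotomy (by linarith) (hquot t ht) with h | h
    · exact Or.inl h
    · exact Or.inr (by simp only [hg]; linarith)
  have hg0 : g 0 = 0 := by simp [hg]
  have hg1 : g 1 = ‖F p - F q‖ := by simp [hg]
  by_contra hcon
  push_neg at hcon
  have h1 : 1 / 2 + γ < g 1 := by
    rcases hdich 1 ⟨zero_le_one, le_refl 1⟩ with h | h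
    · exact absurd (hg1 ▸ h) (not_lt.mpr (hg1 ▸ hcon))
    · exact h
  have hsub : Set.Icc (g 0) (g 1) ⊆ g '' Set.Icc 0 1 :=
    intermediate_value_Icc zero_le_one hgc.continuousOn
  have hmem : (1 / 2 : ℝ) ∈ Set.Icc (g 0) (g 1) := by
    rw [hg0]; constructor <;> [norm_num; linarith]
  obtain ⟨s, hs, hgs⟩ := hsub hmem
  rcases hdich s hs with h | h <;> rw [hgs] at h <;> linarith

/-- If the torus homeomorphism `f` has the δ-shadowing property with constant ε
(under the stated expansivity bound), then so does its lift `F`. -/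
theorem lift_shadowing {F : E 2 → E 2} (hF : IsHomeoLift F) (f : Torus2 ≃ₜ Torus2)
    (hlift : ∀ x : E 2, pr (F x) = f (pr x))
    {δ γ : ℝ} (hδ : δ ∈ Set.Ioo (0 : ℝ) (1 / 2)) (hγ : γ ∈ Set.Ioo (0 : ℝ) (1 / 2))
    (hexp : ∀ x y : Torus2, dist x y < δ → dist (f x) (f y) < 1 / 2 - γ)
    {ε : ℝ} (hε : ε ∈ Set.Ioo 0 γ)
    (hshadow : ∀ ξ : ℕ → Torus2, (∀ n : ℕ, dist (f (ξ n)) (ξ (n + 1)) ≤ ε) →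
      ∃ z : Torus2, ∀ n : ℕ, dist ((⇑f)^[n] z) (ξ n) < δ) :
    ∀ ξ : ℕ → E 2, (∀ n : ℕ, ‖F (ξ n) - ξ (n + 1)‖ ≤ ε) →
      ∃ x : E 2, ∀ n : ℕ, ‖F^[n] x - ξ n‖ < δ := by
  intro ξ hξ
  obtain ⟨⟨hFc, -⟩, -⟩ := hF
  -- the projected sequence is an ε-pseudo-orbit of f
  have hη : ∀ n, dist (f (pr (ξ n))) (pr (ξ (n + 1))) ≤ ε := by
    intro n
    rw [← hlift]
    exact (dist_pr_le _ _).trans (hξ n)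
  obtain ⟨z, hz⟩ := hshadow (fun n => pr (ξ n)) hη
  obtain ⟨x0, hx0⟩ := QuotientAddGroup.mk_surjective z
  have hz0 : dist z (pr (ξ 0)) < δ := by simpa using hz 0
  have hq0 : ‖(QuotientAddGroup.mk (x0 - ξ 0) : Torus2)‖ < δ := by
    rw [← dist_pr_eq]
    show dist (QuotientAddGroup.mk x0) (pr (ξ 0)) < δ
    rw [hx0]
    exact hz0
  obtain ⟨v, hv, hvlt⟩ := exists_lattice_rep hq0
  set x := x0 - v with hxdef
  have hprx : pr x = z := by
    show (QuotientAddGroup.mk (x0 - v) : Torus2) = z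
    rw [QuotientAddGroup.mk_sub, (QuotientAddGroup.eq_zero_iff v).mpr hv, sub_zero]
    exact hx0
  have hiter : ∀ n, pr (F^[n] x) = (⇑f)^[n] z := by
    intro n
    induction n with
    | zero => simpa using hprx
    | succ n ih =>
      rw [Function.iterate_succ_apply', Function.iterate_succ_apply', hlift, ih]
  have hdistn : ∀ n, ‖(QuotientAddGroup.mk (F^[n] x - ξ n) : Torus2)‖ < δ := by
    intro n
    rw [← dist_pr_eq, hiter n]
    exact hz n
  have hkey : ∀ a b : E 2, dist (pr a) (pr b) < δ →
      ‖(QuotientAddGroup.mk (F a - F b) : Torus2)‖ < 1 / 2 - γ := by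
    intro a b hab
    rw [← dist_pr_eq, hlift, hlift]
    exact hexp _ _ hab
  refine ⟨x, ?_⟩
  intro n
  induction n with
  | zero =>
    simp only [Function.iterate_zero_apply]
    have heq : x - ξ 0 = x0 - ξ 0 - v := by rw [hxdef]; abel
    rw [heq]
    exact hvlt
  | succ n ih =>
    have hstep : ‖F (F^[n] x) - F (ξ n)‖ < 1 / 2 - γ :=
      step_bound_s15 hFc hγ.1 hγ.2 hkey ih
    have h2 : ‖F^[n + 1] x - ξ (n + 1)‖ < 1 - δ := by
      rw [Function.iterate_succ_apply']
      have htri : ‖F (F^[n] x) - ξ (n + 1)‖ ≤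
          ‖F (F^[n] x) - F (ξ n)‖ + ‖F (ξ n) - ξ (n + 1)‖ := by
        have := dist_triangle (F (F^[n] x)) (F (ξ n)) (ξ (n + 1))
        simpa [dist_eq_norm] using this
      have := hξ n
      have hδ2 := hδ.2
      have hε2 := hε.2
      linarith
    exact norm_small (le_of_lt hδ.2) (hdistn (n + 1)) h2
end
end

section
/- Let F ∈ H(2), ε ≥ 0 and δ > 0, and assume that every finite ε-pseudo-orbit (ξ_j)_{j=0}^n of F is δ-shadowed by an orbit of F, i.e. there exists x ∈ ℝ² with ‖F^j(x) − ξ_j‖ < δ for all 0 ≤ j ≤ n. Then d_H(K_n(F), K_n^ε(F)) ≤ 2δ/n for every n ≥ 1, and consequently ρ_ε(F) = ρ(F). -/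
open Metric Set Pointwise

noncomputable section

lemma iterate_lift {m : ℕ} {F : E m → E m} (hF : IsLift F) (k : ℕ) (x : E m)
    (t : Fin m → ℤ) : F^[k] (x + intVec t) = F^[k] x + intVec t := by
  induction k generalizing x with
  | zero => simp
  | succ k ih =>
    rw [Function.iterate_succ_apply, Function.iterate_succ_apply, hF.2, ih]

lemma orbit_mem_KsetEps {F : E 2 → E 2} {ε : ℝ} (hε : 0 ≤ ε) {n : ℕ}
    {v : E 2} (hv : v ∈ Kset F n) : v ∈ KsetEps F ε n := by
  obtain ⟨x, hx, rfl⟩ := hv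
  refine ⟨fun j => F^[j] x, fun j _ => ?_, by simpa using hx, by simp⟩
  rw [← Function.iterate_succ_apply' F j x]
  simpa using hε

lemma exists_near {F : E 2 → E 2} (hF : IsLift F) {ε δ : ℝ} (hδ : 0 < δ)
    (hshadow : ∀ (n : ℕ) (ξ : ℕ → E 2), IsPseudoOrbit F ε n ξ →
      ∃ x : E 2, ∀ j ≤ n, ‖F^[j] x - ξ j‖ < δ)
    {k : ℕ} (hk : 1 ≤ k) {w : E 2} (hw : w ∈ KsetEps F ε k) :
    ∃ u ∈ Kset F k, dist w u ≤ 2 * δ / k := by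
  obtain ⟨ξ, hξ, hξ0, rfl⟩ := hw
  obtain ⟨x, hx⟩ := hshadow k ξ hξ
  set t : Fin 2 → ℤ := fun i => -⌊x i⌋ with ht
  refine ⟨(k : ℝ)⁻¹ • (F^[k] (x + intVec t) - (x + intVec t)),
    ⟨x + intVec t, ?_, rfl⟩, ?_⟩
  · intro i
    have hcoord : (x + intVec t) i = Int.fract (x i) := by
      simp [intVec, ht, Int.fract, sub_eq_add_neg]
    rw [hcoord]
    exact ⟨Int.fract_nonneg _, (Int.fract_lt_one _).le⟩
  · rw [iterate_lift hF]
    have heq : F^[k] x + intVec t - (x + intVec t) = F^[k] x - x := by abel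
    rw [heq]
    have h1 : ‖ξ k - ξ 0 - (F^[k] x - x)‖ ≤ 2 * δ := by
      have e : ξ k - ξ 0 - (F^[k] x - x) = (ξ k - F^[k] x) + (x - ξ 0) := by abel
      rw [e]
      calc ‖(ξ k - F^[k] x) + (x - ξ 0)‖ ≤ ‖ξ k - F^[k] x‖ + ‖x - ξ 0‖ := norm_add_le _ _
        _ ≤ δ + δ := by
            have h2 := hx k le_rfl
            have h3 := hx 0 (Nat.zero_le _)
            rw [norm_sub_rev] at h2
            simp only [Function.iterate_zero_apply] at h3
            exact add_le_add h2.le h3.le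
        _ = 2 * δ := by ring
    have hkpos : (0:ℝ) < k := by exact_mod_cast hk
    calc dist ((k:ℝ)⁻¹ • (ξ k - ξ 0)) ((k:ℝ)⁻¹ • (F^[k] x - x))
        = (k:ℝ)⁻¹ * ‖ξ k - ξ 0 - (F^[k] x - x)‖ := by
          rw [dist_eq_norm, ← smul_sub, norm_smul]
          simp [abs_of_pos (inv_pos.mpr hkpos)]
      _ ≤ (k:ℝ)⁻¹ * (2 * δ) := mul_le_mul_of_nonneg_left h1 (inv_nonneg.mpr hkpos.le)
      _ = 2 * δ / k := by rw [div_eq_mul_inv]; ring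


/-- If every finite ε-pseudo-orbit of `F` is δ-shadowed by a true orbit, then
`d_H(K_n(F), K_n^ε(F)) ≤ 2δ/n` for all `n ≥ 1`, and `ρ_ε(F) = ρ(F)`. -/
theorem finite_shadowing_epsRotSet_eq_rotSet {F : E 2 → E 2} (hF : IsHomeoLift F)
    {ε δ : ℝ} (hε : 0 ≤ ε) (hδ : 0 < δ)
    (hshadow : ∀ (n : ℕ) (ξ : ℕ → E 2), IsPseudoOrbit F ε n ξ →
      ∃ x : E 2, ∀ j ≤ n, ‖F^[j] x - ξ j‖ < δ) :
    (∀ n : ℕ, 1 ≤ n →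
        Metric.hausdorffDist (Kset F n) (KsetEps F ε n) ≤ 2 * δ / n) ∧
      rotSetEps F ε = rotSet F := by
  have part1 : ∀ n : ℕ, 1 ≤ n →
      Metric.hausdorffDist (Kset F n) (KsetEps F ε n) ≤ 2 * δ / n := by
    intro n hn
    have hnpos : (0:ℝ) < n := by exact_mod_cast hn
    apply Metric.hausdorffDist_le_of_infDist (by positivity)
    · intro v hv
      rw [Metric.infDist_zero_of_mem (orbit_mem_KsetEps hε hv)]
      positivity
    · intro w hw
      obtain ⟨u, hu, hd⟩ := exists_near hF.1 hδ hshadow hn hw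
      exact (Metric.infDist_le_dist_of_mem hu).trans hd
  refine ⟨part1, Set.Subset.antisymm ?_ ?_⟩
  · intro v hv
    refine mem_iInter₂.mpr fun n hn => ?_
    rw [Metric.mem_closure_iff]
    intro η hη
    obtain ⟨M, hM⟩ := exists_nat_gt (4 * δ / η)
    have hN1 : 1 ≤ max n M := le_trans hn (le_max_left _ _)
    have hvN := mem_iInter₂.mp hv (max n M) hN1
    rw [Metric.mem_closure_iff] at hvN
    obtain ⟨w, hw, hdvw⟩ := hvN (η/2) (by positivity)
    obtain ⟨k, hk, hwk⟩ := mem_iUnion₂.mp hw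
    obtain ⟨u, hu, hdwu⟩ := exists_near hF.1 hδ hshadow (le_trans hN1 hk) hwk
    refine ⟨u, mem_iUnion₂.mpr ⟨k, le_trans (le_max_left n M) hk, hu⟩, ?_⟩
    have hMpos : (0:ℝ) < M := lt_of_le_of_lt (by positivity) hM
    have hkM : (M:ℝ) ≤ k := by exact_mod_cast le_trans (le_max_right n M) hk
    have hkpos : (0:ℝ) < k := lt_of_lt_of_le hMpos hkM
    have h2 : 2 * δ / k ≤ 2 * δ / M :=
      div_le_div_of_nonneg_left (by positivity) hMpos hkM
    have h4 : 4 * δ < M * η := by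
      have := (div_lt_iff₀ hη).mp hM
      linarith
    have h3 : 2 * δ / (M:ℝ) < η / 2 := by
      rw [div_lt_div_iff₀ hMpos (by norm_num : (0:ℝ) < 2)]
      linarith
    calc dist v u ≤ dist v w + dist w u := dist_triangle _ _ _
      _ < η/2 + η/2 := add_lt_add_of_lt_of_le hdvw (hdwu.trans (h2.trans h3.le))
      _ = η := by ring
  · intro v hv
    refine mem_iInter₂.mpr fun n hn => ?_
    exact closure_mono
      (iUnion₂_mono fun k _ => fun w hw => orbit_mem_KsetEps hε hw)
      (mem_iInter₂.mp hv n hn)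
end
end
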